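/- Let Δ be a quasi-forest with at least two facets, n vertices, and r = min_i{r_i}. Then there exists a vertex v of Δ whose number of non-neighbours in the 1-skeleton of Δ equals n − r − 2 (the projective dimension of k[Δ]) if and only if there is a free vertex v in a facet F of Δ with dim F = r + 1 such that F meets the rest of Δ in a simplex of dimension r. -/

import Mathlib

/-- Data of a quasi-forest on vertex type `V`: an ordered list of facets
`F 0, …, F (k-1)` of a simplicial complex, where each facet meets the union of
the previous ones in a subset of one of them (so the intersection is a common
face, i.e. a simplex, possibly empty), and no facet is contained in another. -/
structure QuasiForest (V : Type*) [DecidableEq V] (k : ℕ) where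
  F : Fin k → Finset V
  facet : ∀ i j : Fin k, i ≠ j → ¬ F i ⊆ F j
  attach : ∀ i : Fin k, 0 < (i : ℕ) →
    ∃ j < i, ((Finset.univ.filter (fun j : Fin k => j < i)).biUnion F) ∩ F i ⊆ F j

namespace QuasiForest
open scoped Classical

variable {V : Type*} [DecidableEq V] {k : ℕ} (Q : QuasiForest V k)

/-- The attachment face `G i = (F 0 ∪ ⋯ ∪ F (i-1)) ∩ F i`. -/
def G (i : Fin k) : Finset V :=
  ((Finset.univ.filter (fun j : Fin k => j < i)).biUnion Q.F) ∩ Q.F i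

/-- The faces of the quasi-forest: all subsets of the facets. -/
def faces : Set (Finset V) := {s | ∃ i, s ⊆ Q.F i}

/-- The vertex set of the quasi-forest. -/
def verts : Finset V := Finset.univ.biUnion Q.F

/-- `minG = r + 1`, the minimal number of vertices of an attachment face
(`r = min rᵢ` is its minimal dimension). -/
noncomputable def minG : ℕ := sInf {n | ∃ i : Fin k, 0 < (i : ℕ) ∧ (Q.G i).card = n}

/-- The non-neighbours of `v` among the vertices: the neighbours of `v` in the
complement of the 1-skeleton. -/
noncomputable def nonNbrs [Fintype V] (v : V) : Finset V :=
  (Q.verts.erase v).filter (fun u => ({v, u} : Finset V) ∉ Q.faces)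


end QuasiForest

/-- The Stanley–Reisner ideal of a simplicial complex `Δ` (given by its set of
faces): generated by the squarefree monomials corresponding to non-faces. -/
noncomputable def SRIdeal (kk : Type*) [Field kk] {V : Type*} (Δ : Set (Finset V)) :
    Ideal (MvPolynomial V kk) :=
  Ideal.span {m | ∃ s : Finset V, s ∉ Δ ∧ m = ∏ v ∈ s, MvPolynomial.X v}

/-- The Stanley–Reisner ring `k[Δ]`. -/
abbrev SRRing (kk : Type*) [Field kk] {V : Type*} (Δ : Set (Finset V)) :=
  MvPolynomial V kk ⧸ SRIdeal kk Δ

open CategoryTheory in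
/-- The projective dimension of a module: the least `n` (possibly `⊤`, i.e. no
such `n`) such that `M` admits a projective resolution of length `n`. -/
noncomputable def projDim (R : Type*) [Ring R] (M : ModuleCat R) : ℕ∞ :=
  sInf {n : ℕ∞ | ∃ P : ProjectiveResolution M,
    ∀ i : ℕ, n < (i : ℕ∞) → Limits.IsZero (P.complex.X i)}

/-- The `I`-depth of a module `M`: the supremum of lengths of `M`-regular
sequences with entries in `I`. -/
noncomputable def idealDepth {R : Type*} [CommRing R] (I : Ideal R)
    (M : Type*) [AddCommGroup M] [Module R M] : ℕ∞ :=
  sSup {n : ℕ∞ | ∃ rs : List R, (rs.length : ℕ∞) = n ∧ (∀ x ∈ rs, x ∈ I) ∧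
    RingTheory.Sequence.IsRegular M rs}

/-- The irrelevant maximal ideal of a polynomial ring. -/
noncomputable def irrel (kk : Type*) [Field kk] (V : Type*) : Ideal (MvPolynomial V kk) :=
  Ideal.span (Set.range MvPolynomial.X)

/-- The dimension over `k` of the `i`-th graded piece of `S/I`. -/
noncomputable def hilbertCoeff (kk : Type*) [Field kk] {V : Type*}
    (I : Ideal (MvPolynomial V kk)) (i : ℕ) : ℕ :=
  Module.finrank kk (Submodule.map (Ideal.Quotient.mkₐ kk I).toLinearMap
    (MvPolynomial.homogeneousSubmodule V kk i))

/-- The Hilbert series `∑ᵢ dim_k (S/I)ᵢ tⁱ` of `S/I`, as a power series over `ℚ`. -/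
noncomputable def hilbertSeries (kk : Type*) [Field kk] {V : Type*}
    (I : Ideal (MvPolynomial V kk)) : PowerSeries ℚ :=
  PowerSeries.mk fun i => (hilbertCoeff kk I i : ℚ)


namespace QuasiForest

variable {V : Type*} [DecidableEq V] {k : ℕ} (Q : QuasiForest V k)

lemma F_subset_verts (i : Fin k) : Q.F i ⊆ Q.verts :=
  fun x hx => Finset.mem_biUnion.2 ⟨i, Finset.mem_univ i, hx⟩

lemma G_subset_F (i : Fin k) : Q.G i ⊆ Q.F i := Finset.inter_subset_right

lemma minG_le (i : Fin k) (hi : 0 < (i : ℕ)) : Q.minG ≤ (Q.G i).card :=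
  Nat.sInf_le ⟨i, hi, rfl⟩

lemma minG_add_one_le_card (hk : 2 ≤ k) (i : Fin k) :
    Q.minG + 1 ≤ (Q.F i).card := by
  rcases Nat.eq_zero_or_pos (i : ℕ) with hi | hi
  · have hone : (1 : ℕ) < k := by omega
    set one : Fin k := ⟨1, hone⟩ with hone_def
    have hne : i ≠ one := by
      intro h
      rw [h] at hi
      simp [hone_def] at hi
    obtain ⟨x, hxF, hxn⟩ := Finset.not_subset.1 (Q.facet i one hne)
    have hGsub : Q.G one ⊆ Q.F i := by
      intro y hy
      have h1 := (Finset.mem_inter.1 hy).1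
      obtain ⟨j, hj, hyj⟩ := Finset.mem_biUnion.1 h1
      have hj' : j = i := by
        have h2 : (j : ℕ) < (one : ℕ) := Fin.lt_def.1 (Finset.mem_filter.1 hj).2
        apply Fin.ext
        simp only [hone_def] at h2
        omega
      rwa [hj'] at hyj
    have hxG : x ∉ Q.G one := fun h => hxn (Q.G_subset_F one h)
    calc Q.minG + 1 ≤ (Q.G one).card + 1 := by
          have := Q.minG_le one (by simp [hone_def])
          omega
      _ = (insert x (Q.G one)).card := (Finset.card_insert_of_notMem hxG).symm
      _ ≤ (Q.F i).card := Finset.card_le_card (Finset.insert_subset hxF hGsub)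
  · obtain ⟨j, hj, hsub⟩ := Q.attach i hi
    have hne : i ≠ j := (ne_of_lt hj).symm
    obtain ⟨x, hxF, hxn⟩ := Finset.not_subset.1 (Q.facet i j hne)
    have hxG : x ∉ Q.G i := fun h => hxn (hsub h)
    calc Q.minG + 1 ≤ (Q.G i).card + 1 := by
          have := Q.minG_le i hi
          omega
      _ = (insert x (Q.G i)).card := (Finset.card_insert_of_notMem hxG).symm
      _ ≤ (Q.F i).card :=
          Finset.card_le_card (Finset.insert_subset hxF (Q.G_subset_F i))

lemma nonNbrs_eq_sdiff [Fintype V] (v : V) (hv : v ∈ Q.verts) :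
    Q.nonNbrs v
      = Q.verts \ (Finset.univ.filter (fun j => v ∈ Q.F j)).biUnion Q.F := by
  ext u
  simp only [nonNbrs, faces, Finset.mem_filter, Finset.mem_erase, Finset.mem_sdiff,
    Finset.mem_biUnion, Finset.mem_univ, true_and, Set.mem_setOf_eq]
  constructor
  · rintro ⟨⟨hne, hu⟩, hnf⟩
    refine ⟨hu, ?_⟩
    rintro ⟨j, hvj, huj⟩
    exact hnf ⟨j, Finset.insert_subset hvj (Finset.singleton_subset_iff.2 huj)⟩
  · rintro ⟨hu, hn⟩
    have hne : u ≠ v := by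
      rintro rfl
      obtain ⟨j, _, hj⟩ := Finset.mem_biUnion.1 hv
      exact hn ⟨j, hj, hj⟩
    refine ⟨⟨hne, hu⟩, ?_⟩
    rintro ⟨j, hsub⟩
    exact hn ⟨j, hsub (Finset.mem_insert_self _ _), hsub (by simp)⟩

end QuasiForest

/-- for a quasi-forest `Δ` with at least two facets, there is a
vertex whose number of non-neighbours in the 1-skeleton equals
`n − r − 2 = n − minG − 1` (the projective dimension of `k[Δ]`) iff there is a
free vertex `v` in a facet `F` with `dim F = r + 1` (i.e. `card F = minG + 1`)
such that `F` meets the rest of `Δ` in a simplex of dimension `r`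
(a subset of another facet of cardinality `minG`). -/
theorem nonNbrs_eq_pd_iff_free_vertex {V : Type*} [DecidableEq V] {k : ℕ}
    [Fintype V] (hk : 2 ≤ k) (Q : QuasiForest V k) :
    (∃ v ∈ Q.verts, (Q.nonNbrs v).card = Q.verts.card - Q.minG - 1) ↔
      (∃ i : Fin k, ∃ v ∈ Q.F i,
        (∀ j, j ≠ i → v ∉ Q.F j) ∧
        (Q.F i).card = Q.minG + 1 ∧
        (Q.F i ∩ ((Finset.univ.filter (fun j : Fin k => j ≠ i)).biUnion Q.F)).card
          = Q.minG ∧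
        ∃ j, j ≠ i ∧
          Q.F i ∩ ((Finset.univ.filter (fun j : Fin k => j ≠ i)).biUnion Q.F)
            ⊆ Q.F j) := by
  classical
  constructor
  · rintro ⟨v, hv, hcard⟩
    obtain ⟨i₀, -, hvF⟩ := Finset.mem_biUnion.1 hv
    set Nv := (Finset.univ.filter (fun j => v ∈ Q.F j)).biUnion Q.F with hNv
    have hNsub : Nv ⊆ Q.verts := Finset.biUnion_subset.2 fun j _ => Q.F_subset_verts j
    have hcard' : Q.verts.card - Nv.card = Q.verts.card - Q.minG - 1 := by
      rw [Q.nonNbrs_eq_sdiff v hv, Finset.card_sdiff_of_subset hNsub] at hcard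
      exact hcard
    have hFN : Q.F i₀ ⊆ Nv := fun x hx =>
      Finset.mem_biUnion.2 ⟨i₀, Finset.mem_filter.2 ⟨Finset.mem_univ _, hvF⟩, hx⟩
    have h1 : Q.minG + 1 ≤ (Q.F i₀).card := Q.minG_add_one_le_card hk i₀
    have h2 : Nv.card ≤ Q.verts.card := Finset.card_le_card hNsub
    have h3 : (Q.F i₀).card ≤ Nv.card := Finset.card_le_card hFN
    have hNcard : Nv.card = Q.minG + 1 := by omega
    have hFNeq : Q.F i₀ = Nv := Finset.eq_of_subset_of_card_le hFN (by omega)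
    have hfree : ∀ j, j ≠ i₀ → v ∉ Q.F j := by
      intro j hj hvj
      have hsub : Q.F j ⊆ Nv := fun x hx =>
        Finset.mem_biUnion.2 ⟨j, Finset.mem_filter.2 ⟨Finset.mem_univ _, hvj⟩, hx⟩
      exact Q.facet j i₀ hj (hFNeq ▸ hsub)
    have hFcard : (Q.F i₀).card = Q.minG + 1 := by rw [hFNeq]; exact hNcard
    set H := Q.F i₀ ∩ ((Finset.univ.filter (fun j : Fin k => j ≠ i₀)).biUnion Q.F)
      with hH
    have hvH : v ∉ H := by
      intro h
      obtain ⟨j, hj, hvj⟩ := Finset.mem_biUnion.1 (Finset.mem_inter.1 h).2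
      exact hfree j (Finset.mem_filter.1 hj).2 hvj
    have hHsub : H ⊆ (Q.F i₀).erase v := fun x hx =>
      Finset.mem_erase.2 ⟨fun h => hvH (h ▸ hx), (Finset.mem_inter.1 hx).1⟩
    have hHcard : H.card ≤ Q.minG := by
      have h5 := Finset.card_le_card hHsub
      rw [Finset.card_erase_of_mem hvF, hFcard] at h5
      omega
    rcases Nat.eq_zero_or_pos (i₀ : ℕ) with hi0 | hi0
    · have hone : (1 : ℕ) < k := by omega
      set one : Fin k := ⟨1, hone⟩ with hone_def
      have honei : one ≠ i₀ := by
        intro h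
        rw [← h] at hi0
        simp [hone_def] at hi0
      have hGsub : Q.G one ⊆ H := by
        intro x hx
        obtain ⟨hx1, hx2⟩ := Finset.mem_inter.1 hx
        obtain ⟨j, hj, hxj⟩ := Finset.mem_biUnion.1 hx1
        have hji : j = i₀ := by
          have h2 : (j : ℕ) < (one : ℕ) := Fin.lt_def.1 (Finset.mem_filter.1 hj).2
          apply Fin.ext
          simp only [hone_def] at h2
          omega
        refine Finset.mem_inter.2 ⟨hji ▸ hxj,
          Finset.mem_biUnion.2 ⟨one, Finset.mem_filter.2 ⟨Finset.mem_univ _, honei⟩, hx2⟩⟩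
      have hGm : Q.minG ≤ (Q.G one).card := Q.minG_le one (by simp [hone_def])
      have hHG : H = Q.G one :=
        (Finset.eq_of_subset_of_card_le hGsub (le_trans hHcard hGm)).symm
      have h6 : (Q.G one).card ≤ H.card := Finset.card_le_card hGsub
      refine ⟨i₀, v, hvF, hfree, hFcard, ?_, one, honei, ?_⟩
      · rw [← hH]
        omega
      · rw [← hH, hHG]
        exact Q.G_subset_F one
    · obtain ⟨j₀, hj₀, hsub₀⟩ := Q.attach i₀ hi0
      have hGsub : Q.G i₀ ⊆ H := by
        intro x hx
        obtain ⟨hx1, hx2⟩ := Finset.mem_inter.1 hx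
        obtain ⟨j, hj, hxj⟩ := Finset.mem_biUnion.1 hx1
        have hjne : j ≠ i₀ := ne_of_lt (Finset.mem_filter.1 hj).2
        exact Finset.mem_inter.2 ⟨hx2,
          Finset.mem_biUnion.2 ⟨j, Finset.mem_filter.2 ⟨Finset.mem_univ _, hjne⟩, hxj⟩⟩
      have hGm : Q.minG ≤ (Q.G i₀).card := Q.minG_le i₀ hi0
      have hHG : H = Q.G i₀ :=
        (Finset.eq_of_subset_of_card_le hGsub (le_trans hHcard hGm)).symm
      have h6 : (Q.G i₀).card ≤ H.card := Finset.card_le_card hGsub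
      refine ⟨i₀, v, hvF, hfree, hFcard, ?_, j₀, ne_of_lt hj₀, ?_⟩
      · rw [← hH]
        omega
      · rw [← hH, hHG]
        exact hsub₀
  · rintro ⟨i, v, hvF, hfree, hFcard, -, -⟩
    have hv : v ∈ Q.verts := Q.F_subset_verts i hvF
    refine ⟨v, hv, ?_⟩
    have hfil : (Finset.univ.filter (fun j => v ∈ Q.F j)) = {i} := by
      ext j
      simp only [Finset.mem_filter, Finset.mem_univ, true_and, Finset.mem_singleton]
      constructor
      · intro hj
        by_contra h
        exact hfree j h hj
      · rintro rfl
        exact hvF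
    rw [Q.nonNbrs_eq_sdiff v hv, hfil, Finset.singleton_biUnion,
      Finset.card_sdiff_of_subset (Q.F_subset_verts i), hFcard]
    omega
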